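/- Theorem 2 (impact of cell width and depth on block-wise Lipschitz smoothness): Let F : (ℝ^d)^n → ℝ be differentiable, x ∈ ℝ^d, and let f and f̂ be the widest-cell and narrowest-cell objectives respectively; write Ŵ^{(k)} = ∏_{j=1}^{k} W^{(j)} for the effective weights, λ^{(j)} = ‖W^{(j)}‖, and fix i ∈ {1,…,n}. Let (W_1^{(1)},…,W_1^{(n)}) and (W_2^{(1)},…,W_2^{(n)}) be two parameter tuples that differ only in the i-th block (W_1^{(j)} = W_2^{(j)} = W^{(j)} for j ≠ i). Assume the block-wise Lipschitz condition that for every k ∈ {i,…,n}, ‖∂f/∂V^{(k)}(Ŵ_1) − ∂f/∂V^{(k)}(Ŵ_2)‖ ≤ L_k ‖W_1^{(k)} − W_2^{(k)}‖, where Ŵ_1, Ŵ_2 denote the tuples of effective weights built from the two parameter tuples. Then ‖∂f̂/∂W^{(i)}(W_1) − ∂f̂/∂W^{(i)}(W_2)‖ ≤ (∏_{j=1}^{i−1} λ^{(j)}) L_i ‖W_1^{(i)} − W_2^{(i)}‖. -/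

import Mathlib

/-!
Statement 5 (Theorem 2): impact of cell width and depth on block-wise Lipschitz smoothness.
`‖·‖` is the spectral (ℓ2 operator) norm on real `d × d` matrices (scoped `Matrix.L2OpNorm`
instances).  Indices of the `n` intermediate nodes are `0, …, n-1` (the paper's
`W^{(1)}, …, W^{(n)}` correspond to `W 0, …, W (n-1)`).  The reversed product convention
`∏_{j=a}^{b} W^{(j)} = W^{(b)} ⋯ W^{(a)}` is implemented by `prodRev`; empty matrix products
are the identity and empty real products are `1`.  The two parameter tuples differ only in the
`i`-th block: they are `Function.update W i W1i` and `Function.update W i W2i`.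
-/

open scoped Matrix.Norms.L2Operator

open Matrix

/-- Reversed (descending-index) product of the matrices `W j`, `j ∈ s`;
the empty product is the identity. -/
noncomputable def prodRev {n d : ℕ} (W : Fin n → Matrix (Fin d) (Fin d) ℝ)
    (s : Finset (Fin n)) : Matrix (Fin d) (Fin d) ℝ :=
  (((s.sort (· ≤ ·)).map W).reverse).prod

/-- `∂g/∂W⁽ⁱ⁾`: the `d × d` matrix whose `(a, b)` entry is the partial derivative of the scalar
function `g` of an `n`-tuple of `d × d` real matrices with respect to the `(a, b)` entry of the
`i`-th matrix argument. -/
noncomputable def matGrad {n d : ℕ}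
    (g : (Fin n → Matrix (Fin d) (Fin d) ℝ) → ℝ)
    (W : Fin n → Matrix (Fin d) (Fin d) ℝ) (i : Fin n) : Matrix (Fin d) (Fin d) ℝ :=
  Matrix.of fun a b => fderiv ℝ g W (Pi.single i (Matrix.single a b 1))

/-! ### Auxiliary lemmas about `prodRev` -/

theorem prodRev_empty {n d : ℕ} (W : Fin n → Matrix (Fin d) (Fin d) ℝ) :
    prodRev W ∅ = 1 := by simp [prodRev]

theorem prodRev_singleton {n d : ℕ} (W : Fin n → Matrix (Fin d) (Fin d) ℝ) (a : Fin n) :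
    prodRev W {a} = W a := by simp [prodRev]

theorem prodRev_insert_min {n d : ℕ} (W : Fin n → Matrix (Fin d) (Fin d) ℝ)
    {a : Fin n} {s : Finset (Fin n)} (h₁ : ∀ b ∈ s, a ≤ b) (h₂ : a ∉ s) :
    prodRev W (insert a s) = prodRev W s * W a := by
  unfold prodRev
  rw [Finset.sort_insert _ h₁ h₂]
  simp

theorem prodRev_congr {n d : ℕ} {W W' : Fin n → Matrix (Fin d) (Fin d) ℝ}
    {s : Finset (Fin n)} (h : ∀ j ∈ s, W j = W' j) : prodRev W s = prodRev W' s := by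
  unfold prodRev
  congr 2
  exact List.map_congr_left fun j hj => h j ((Finset.mem_sort _).1 hj)

theorem prodRev_union {n d : ℕ} (W : Fin n → Matrix (Fin d) (Fin d) ℝ)
    (s : Finset (Fin n)) :
    ∀ t : Finset (Fin n), (∀ a ∈ s, ∀ b ∈ t, b < a) →
      prodRev W (s ∪ t) = prodRev W s * prodRev W t := by
  intro t
  induction t using Finset.induction_on_min with
  | empty => intro _; simp [prodRev_empty]
  | insert a t ha ih =>
    intro h
    have hat : a ∉ t := fun hx => lt_irrefl a (ha a hx)
    have h1 : ∀ b ∈ s ∪ t, a ≤ b := by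
      intro b hb
      rcases Finset.mem_union.1 hb with hb | hb
      · exact le_of_lt (h b hb a (Finset.mem_insert_self a t))
      · exact le_of_lt (ha b hb)
    have h2 : a ∉ s ∪ t := by
      intro hx
      rcases Finset.mem_union.1 hx with hx | hx
      · exact lt_irrefl a (h a hx a (Finset.mem_insert_self a t))
      · exact lt_irrefl a (ha a hx)
    calc prodRev W (s ∪ insert a t) = prodRev W (insert a (s ∪ t)) := by
          rw [Finset.union_insert]
      _ = prodRev W (s ∪ t) * W a := prodRev_insert_min W h1 h2
      _ = prodRev W s * prodRev W t * W a := by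
          rw [ih (fun a' ha' b hb => h a' ha' b (Finset.mem_insert_of_mem hb))]
      _ = prodRev W s * prodRev W (insert a t) := by
          rw [prodRev_insert_min W (fun b hb => le_of_lt (ha b hb)) hat, mul_assoc]

theorem prodRev_Iic_split {n d : ℕ} (W : Fin n → Matrix (Fin d) (Fin d) ℝ)
    {i k : Fin n} (h : i ≤ k) :
    prodRev W (Finset.Iic k) = prodRev W (Finset.Ioc i k) * (W i * prodRev W (Finset.Iio i)) := by
  have h1 : Finset.Ioc i k ∪ Finset.Iic i = Finset.Iic k := by
    ext b
    simp only [Finset.mem_union, Finset.mem_Ioc, Finset.mem_Iic, Fin.le_def, Fin.lt_def] at *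
    omega
  have h2 : ({i} : Finset (Fin n)) ∪ Finset.Iio i = Finset.Iic i := by
    ext b
    simp only [Finset.mem_union, Finset.mem_singleton, Finset.mem_Iio, Finset.mem_Iic,
      Fin.le_def, Fin.lt_def] at *
    omega
  rw [← h1, prodRev_union W _ _ (fun a ha b hb =>
    lt_of_le_of_lt (Finset.mem_Iic.1 hb) (Finset.mem_Ioc.1 ha).1), ← h2,
    prodRev_union W _ _ (fun a ha b hb => by
      rw [Finset.mem_singleton.1 ha]; exact Finset.mem_Iio.1 hb), prodRev_singleton]

theorem norm_prodRev_le {n d : ℕ} (hd : 1 ≤ d) (W : Fin n → Matrix (Fin d) (Fin d) ℝ)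
    (s : Finset (Fin n)) : ‖prodRev W s‖ ≤ ∏ j ∈ s, ‖W j‖ := by
  haveI : Nonempty (Fin d) := ⟨⟨0, hd⟩⟩
  induction s using Finset.induction_on_min with
  | empty => simp [prodRev_empty]
  | insert a t ha ih =>
    have hat : a ∉ t := fun hx => lt_irrefl a (ha a hx)
    rw [prodRev_insert_min W (fun b hb => le_of_lt (ha b hb)) hat,
      Finset.prod_insert hat, mul_comm ‖W a‖]
    exact le_trans (norm_mul_le _ _)
      (mul_le_mul_of_nonneg_right ih (norm_nonneg _) |>.trans
        (mul_le_mul_of_nonneg_left le_rfl (by positivity)))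

/-! ### Differentiability lemmas -/

theorem differentiable_listProd {n d : ℕ} (l : List (Fin n)) :
    Differentiable ℝ (fun V : Fin n → Matrix (Fin d) (Fin d) ℝ => (l.map V).prod) := by
  induction l with
  | nil => simpa using differentiable_const (1 : Matrix (Fin d) (Fin d) ℝ)
  | cons a l ih =>
    exact ((ContinuousLinearMap.proj a :
      (Fin n → Matrix (Fin d) (Fin d) ℝ) →L[ℝ] Matrix (Fin d) (Fin d) ℝ).differentiable).mul ih

theorem differentiable_prodRev {n d : ℕ} (s : Finset (Fin n)) :
    Differentiable ℝ (fun V : Fin n → Matrix (Fin d) (Fin d) ℝ => prodRev V s) := by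
  have : ∀ V : Fin n → Matrix (Fin d) (Fin d) ℝ,
      prodRev V s = (((s.sort (· ≤ ·)).reverse).map V).prod := by
    intro V; rw [prodRev, List.map_reverse]
  simpa [this] using differentiable_listProd ((s.sort (· ≤ ·)).reverse)

/-- `M ↦ M.mulVec x` as a continuous linear map. -/
noncomputable def mulVecCLM {d : ℕ} (x : Fin d → ℝ) :
    Matrix (Fin d) (Fin d) ℝ →L[ℝ] (Fin d → ℝ) :=
  LinearMap.toContinuousLinearMap
    { toFun := fun M => M.mulVec x
      map_add' := fun M N => by simp only [Matrix.add_mulVec]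
      map_smul' := fun c M => by simp only [Matrix.smul_mulVec, RingHom.id_apply] }

/-- Two directional derivatives agree if the two functions agree along matching lines. -/
theorem fderiv_line_eq {E₁ E₂ : Type*} [NormedAddCommGroup E₁] [NormedSpace ℝ E₁]
    [NormedAddCommGroup E₂] [NormedSpace ℝ E₂] {g₁ : E₁ → ℝ} {g₂ : E₂ → ℝ}
    {p₁ h₁ : E₁} {p₂ h₂ : E₂}
    (hg₁ : DifferentiableAt ℝ g₁ p₁) (hg₂ : DifferentiableAt ℝ g₂ p₂)
    (heq : ∀ t : ℝ, g₁ (p₁ + t • h₁) = g₂ (p₂ + t • h₂)) :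
    fderiv ℝ g₁ p₁ h₁ = fderiv ℝ g₂ p₂ h₂ := by
  have line₁ : HasDerivAt (fun t : ℝ => p₁ + t • h₁) h₁ 0 := by
    simpa using ((hasDerivAt_id (0:ℝ)).smul_const h₁).const_add p₁
  have line₂ : HasDerivAt (fun t : ℝ => p₂ + t • h₂) h₂ 0 := by
    simpa using ((hasDerivAt_id (0:ℝ)).smul_const h₂).const_add p₂
  have hp₁ : p₁ + (0:ℝ) • h₁ = p₁ := by simp
  have hp₂ : p₂ + (0:ℝ) • h₂ = p₂ := by simp
  have H₁ : HasDerivAt (fun t : ℝ => g₁ (p₁ + t • h₁)) (fderiv ℝ g₁ p₁ h₁) 0 :=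
    HasFDerivAt.comp_hasDerivAt 0 (by rw [hp₁]; exact hg₁.hasFDerivAt) line₁
  have H₂ : HasDerivAt (fun t : ℝ => g₂ (p₂ + t • h₂)) (fderiv ℝ g₂ p₂ h₂) 0 :=
    HasFDerivAt.comp_hasDerivAt 0 (by rw [hp₂]; exact hg₂.hasFDerivAt) line₂
  have H₂' : HasDerivAt (fun t : ℝ => g₁ (p₁ + t • h₁)) (fderiv ℝ g₂ p₂ h₂) 0 := by
    simpa [funext heq] using H₂
  exact H₁.unique H₂'

/-! ### Algebraic helper lemmas -/

/-- `M ↦ Pi.single k (M.mulVec x)` as a linear map. -/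
noncomputable def singleMulVecL {n d : ℕ} (x : Fin d → ℝ) (k : Fin n) :
    Matrix (Fin d) (Fin d) ℝ →ₗ[ℝ] (Fin n → Fin d → ℝ) where
  toFun M := Pi.single k (M.mulVec x)
  map_add' M N := by simp only [Matrix.add_mulVec, Pi.single_add]
  map_smul' c M := by simp only [Matrix.smul_mulVec, RingHom.id_apply, Pi.single_smul]

theorem psi_single_mulVec {n d : ℕ} (Ψ : (Fin n → (Fin d → ℝ)) →L[ℝ] ℝ)
    (x : Fin d → ℝ) (k : Fin n) (M : Matrix (Fin d) (Fin d) ℝ) :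
    Ψ (Pi.single k (M.mulVec x))
      = ∑ a, ∑ b, M a b * Ψ (Pi.single k ((Matrix.single a b 1).mulVec x)) := by
  have h1 : M = ∑ a, ∑ b, M a b • Matrix.single a b (1:ℝ) := by
    conv_lhs => rw [matrix_eq_sum_single M]
    simp [smul_single]
  have hM : (Pi.single k (M.mulVec x) : Fin n → Fin d → ℝ)
      = ∑ a, ∑ b, M a b • (Pi.single k ((Matrix.single a b 1).mulVec x) : Fin n → Fin d → ℝ) := by
    change singleMulVecL x k M = _
    conv_lhs => rw [h1]
    rw [map_sum]
    refine Finset.sum_congr rfl fun a _ => by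
      rw [map_sum]
      refine Finset.sum_congr rfl fun b _ => ?_
      rw [_root_.map_smul]
      rfl
  rw [hM, map_sum]
  simp [map_sum, Ψ.map_smul, smul_eq_mul]

theorem sum_std_mul {d : ℕ} (A G : Matrix (Fin d) (Fin d) ℝ) (a b : Fin d) :
    ∑ a', ∑ b', (Matrix.single a b (1:ℝ) * A) a' b' * G a' b' = (G * Aᵀ) a b := by
  rw [Finset.sum_eq_single a]
  · rw [Matrix.mul_apply]
    refine Finset.sum_congr rfl fun c _ => ?_
    rw [Matrix.single_mul_apply_same, one_mul, Matrix.transpose_apply, mul_comm]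
  · intro a' _ ha'
    refine Finset.sum_eq_zero fun b' _ => ?_
    rw [Matrix.single_mul_apply_of_ne (h := ha'), zero_mul]
  · simp

theorem prodRev_update_split {n d : ℕ} (W : Fin n → Matrix (Fin d) (Fin d) ℝ)
    (i : Fin n) (M : Matrix (Fin d) (Fin d) ℝ) {k' : Fin n} (hik : i ≤ k') :
    prodRev (Function.update W i M) (Finset.Iic k')
      = prodRev W (Finset.Ioc i k') * (M * prodRev W (Finset.Iio i)) := by
  rw [prodRev_Iic_split _ hik, Function.update_self]
  rw [prodRev_congr (W' := W) (fun j hj =>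
      Function.update_of_ne (ne_of_gt (Finset.mem_Ioc.1 hj).1) M W),
    prodRev_congr (W' := W) (s := Finset.Iio i) (fun j hj =>
      Function.update_of_ne (ne_of_lt (Finset.mem_Iio.1 hj)) M W)]

theorem prodRev_update_lt {n d : ℕ} (W : Fin n → Matrix (Fin d) (Fin d) ℝ)
    (i : Fin n) (M : Matrix (Fin d) (Fin d) ℝ) {k' : Fin n} (h : k' < i) :
    prodRev (Function.update W i M) (Finset.Iic k') = prodRev W (Finset.Iic k') :=
  prodRev_congr (fun j hj => Function.update_of_ne
    (ne_of_lt (lt_of_le_of_lt (Finset.mem_Iic.1 hj) h)) M W)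

theorem update_line {n d : ℕ} (W : Fin n → Matrix (Fin d) (Fin d) ℝ) (i : Fin n)
    (x : Fin d → ℝ) (Wi E : Matrix (Fin d) (Fin d) ℝ) (t : ℝ) (k' : Fin n) :
    (prodRev (Function.update W i (Wi + t • E)) (Finset.Iic k')).mulVec x
      = (prodRev (Function.update W i Wi) (Finset.Iic k')).mulVec x
        + t • (if i ≤ k' then
            (prodRev W (Finset.Ioc i k') * (E * prodRev W (Finset.Iio i))).mulVec x
          else 0) := by
  by_cases hik : i ≤ k'
  · rw [if_pos hik, prodRev_update_split W i _ hik, prodRev_update_split W i _ hik,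
      add_mul, smul_mul_assoc, mul_add, Matrix.mul_smul, Matrix.add_mulVec,
      Matrix.smul_mulVec]
  · rw [if_neg hik, prodRev_update_lt W i _ (lt_of_not_ge hik),
      prodRev_update_lt W i _ (lt_of_not_ge hik), smul_zero, add_zero]

theorem blockwise_lipschitz_smoothness {n d : ℕ} (hn : 1 ≤ n) (hd : 1 ≤ d)
    (F : (Fin n → (Fin d → ℝ)) → ℝ) (hF : Differentiable ℝ F)
    (x : Fin d → ℝ) (W : Fin n → Matrix (Fin d) (Fin d) ℝ) (i : Fin n)
    (W1i W2i : Matrix (Fin d) (Fin d) ℝ)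
    (L : Fin n → ℝ)
    (hLip : ∀ k ∈ Finset.Ici i,
      ‖matGrad (fun V => F fun k' => (V k').mulVec x)
          (fun k' => prodRev (Function.update W i W1i) (Finset.Iic k')) k
        - matGrad (fun V => F fun k' => (V k').mulVec x)
          (fun k' => prodRev (Function.update W i W2i) (Finset.Iic k')) k‖
        ≤ L k * ‖Function.update W i W1i k - Function.update W i W2i k‖) :
    ‖matGrad (fun V => F fun k' => (prodRev V (Finset.Iic k')).mulVec x)
        (Function.update W i W1i) i
      - matGrad (fun V => F fun k' => (prodRev V (Finset.Iic k')).mulVec x)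
        (Function.update W i W2i) i‖
      ≤ (∏ j ∈ Finset.Iio i, ‖W j‖) * L i * ‖W1i - W2i‖ := by
  classical
  -- notation
  set g : (Fin n → Matrix (Fin d) (Fin d) ℝ) → ℝ :=
    fun V => F fun k' => (prodRev V (Finset.Iic k')).mulVec x with hg_def
  set f : (Fin n → Matrix (Fin d) (Fin d) ℝ) → ℝ :=
    fun V => F fun k' => (V k').mulVec x with hf_def
  set A : Matrix (Fin d) (Fin d) ℝ := prodRev W (Finset.Iio i) with hA_def
  set B : Fin n → Matrix (Fin d) (Fin d) ℝ := fun k => prodRev W (Finset.Ioc i k) with hB_def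
  -- differentiability
  have hg : Differentiable ℝ g :=
    hF.comp (differentiable_pi.2 fun k' =>
      (mulVecCLM x).differentiable.comp (differentiable_prodRev (Finset.Iic k')))
  have hf : Differentiable ℝ f :=
    hF.comp (differentiable_pi.2 fun k' =>
      (mulVecCLM x).differentiable.comp
        ((ContinuousLinearMap.proj k' :
          (Fin n → Matrix (Fin d) (Fin d) ℝ) →L[ℝ] Matrix (Fin d) (Fin d) ℝ).differentiable))
  -- the two effective-weight points and intermediate nodes
  set yh : Matrix (Fin d) (Fin d) ℝ → (Fin n → Fin d → ℝ) :=
    fun Wi => fun k' => (prodRev (Function.update W i Wi) (Finset.Iic k')).mulVec x with hyh_def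
  set vdir : Matrix (Fin d) (Fin d) ℝ → (Fin n → Fin d → ℝ) :=
    fun E => fun k' => if i ≤ k' then (B k' * (E * A)).mulVec x else 0 with hvdir_def
  -- key directional formula for the narrowest-cell objective
  have keyg : ∀ (Wi E : Matrix (Fin d) (Fin d) ℝ),
      fderiv ℝ g (Function.update W i Wi)
          (Pi.single i E : Fin n → Matrix (Fin d) (Fin d) ℝ)
        = fderiv ℝ F (yh Wi) (vdir E) := by
    intro Wi E
    refine fderiv_line_eq (hg _) (hF _) fun t => ?_
    have hupd : Function.update W i Wi
        + t • (Pi.single i E : Fin n → Matrix (Fin d) (Fin d) ℝ)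
        = Function.update W i (Wi + t • E) := by
      funext j
      by_cases hj : j = i
      · subst hj; simp
      · simp [Function.update_of_ne hj, Pi.single_eq_of_ne hj]
    rw [hupd, hg_def]
    show F (fun k' => (prodRev (Function.update W i (Wi + t • E)) (Finset.Iic k')).mulVec x)
      = F (yh Wi + t • vdir E)
    congr 1
    funext k'
    rw [update_line W i x Wi E t k']
    rfl
  -- key directional formula for the widest-cell objective
  have keyf : ∀ (Wi : Matrix (Fin d) (Fin d) ℝ) (k : Fin n) (N : Matrix (Fin d) (Fin d) ℝ),
      fderiv ℝ f (fun k' => prodRev (Function.update W i Wi) (Finset.Iic k'))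
          (Pi.single k N : Fin n → Matrix (Fin d) (Fin d) ℝ)
        = fderiv ℝ F (yh Wi) (Pi.single k (N.mulVec x)) := by
    intro Wi k N
    refine fderiv_line_eq (hf _) (hF _) fun t => ?_
    rw [hf_def]
    show F (fun k' => (((fun k' => prodRev (Function.update W i Wi) (Finset.Iic k'))
        + t • (Pi.single k N : Fin n → Matrix (Fin d) (Fin d) ℝ)) k').mulVec x)
      = F (yh Wi + t • (Pi.single k (N.mulVec x) : Fin n → Fin d → ℝ))
    congr 1
    funext k'
    simp only [Pi.add_apply, Pi.smul_apply]
    by_cases hk : k' = k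
    · subst hk
      simp [Matrix.add_mulVec, Matrix.smul_mulVec, yh]
    · simp [Pi.single_eq_of_ne hk, yh]
  -- the difference functional
  set Ψ : (Fin n → (Fin d → ℝ)) →L[ℝ] ℝ := fderiv ℝ F (yh W1i) - fderiv ℝ F (yh W2i) with hΨ_def
  -- entries of the widest-cell gradient differences
  have hGdiff : ∀ (k : Fin n) (a b : Fin d),
      (matGrad f (fun k' => prodRev (Function.update W i W1i) (Finset.Iic k')) k
        - matGrad f (fun k' => prodRev (Function.update W i W2i) (Finset.Iic k')) k) a b
      = Ψ (Pi.single k ((Matrix.single a b (1:ℝ)).mulVec x)) := by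
    intro k a b
    rw [Matrix.sub_apply]
    show fderiv ℝ f _ _ - fderiv ℝ f _ _ = _
    rw [keyf W1i k _, keyf W2i k _, hΨ_def]
    simp
  -- the widest-cell gradient differences vanish for k ≠ i
  have hvanish : ∀ k : Fin n, i < k →
      ∀ (M : Matrix (Fin d) (Fin d) ℝ), Ψ (Pi.single k (M.mulVec x)) = 0 := by
    intro k hk M
    have h0 : matGrad f (fun k' => prodRev (Function.update W i W1i) (Finset.Iic k')) k
        - matGrad f (fun k' => prodRev (Function.update W i W2i) (Finset.Iic k')) k = 0 := by
      have := hLip k (Finset.mem_Ici.2 (le_of_lt hk))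
      rw [Function.update_of_ne (ne_of_gt hk), Function.update_of_ne (ne_of_gt hk),
        sub_self, norm_zero, mul_zero] at this
      exact norm_le_zero_iff.1 this
    rw [psi_single_mulVec]
    refine Finset.sum_eq_zero fun a _ => Finset.sum_eq_zero fun b _ => ?_
    rw [← hGdiff k a b, h0]
    simp
  have hG : matGrad f (fun k' => prodRev (Function.update W i W1i) (Finset.Iic k')) i
      - matGrad f (fun k' => prodRev (Function.update W i W2i) (Finset.Iic k')) i
      = Matrix.of fun a' b' => Ψ (Pi.single i ((Matrix.single a' b' (1:ℝ)).mulVec x)) := by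
    ext a' b'
    rw [hGdiff i a' b']
    rfl
  -- main identity: the narrowest-cell gradient difference equals (Gdiff i) * Aᵀ
  have hmain : matGrad g (Function.update W i W1i) i - matGrad g (Function.update W i W2i) i
      = (matGrad f (fun k' => prodRev (Function.update W i W1i) (Finset.Iic k')) i
        - matGrad f (fun k' => prodRev (Function.update W i W2i) (Finset.Iic k')) i) * Aᵀ := by
    ext a b
    rw [Matrix.sub_apply]
    show fderiv ℝ g _ _ - fderiv ℝ g _ _ = _
    rw [keyg W1i _, keyg W2i _]
    have hΨv : fderiv ℝ F (yh W1i) (vdir (Matrix.single a b (1:ℝ)))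
        - fderiv ℝ F (yh W2i) (vdir (Matrix.single a b (1:ℝ)))
        = Ψ (vdir (Matrix.single a b (1:ℝ))) := by
      rw [hΨ_def]; simp
    rw [hΨv]
    -- expand the direction as a sum of single-coordinate directions
    have hexp : (vdir (Matrix.single a b (1:ℝ)))
        = ∑ k', Pi.single k' (vdir (Matrix.single a b (1:ℝ)) k') := by
      rw [Finset.univ_sum_single]
    rw [hexp, map_sum]
    rw [Finset.sum_eq_single i]
    · -- the k' = i term
      have hBi : B i = 1 := by rw [hB_def]; simp [prodRev_empty]
      have : vdir (Matrix.single a b (1:ℝ)) i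
          = ((Matrix.single a b (1:ℝ) * A)).mulVec x := by
        rw [hvdir_def]
        simp [hBi]
      rw [this, psi_single_mulVec Ψ x i (Matrix.single a b (1:ℝ) * A), hG,
        ← sum_std_mul A (Matrix.of fun a' b' =>
          Ψ (Pi.single i ((Matrix.single a' b' (1:ℝ)).mulVec x))) a b]
      exact Finset.sum_congr rfl fun a' _ => Finset.sum_congr rfl fun b' _ => rfl
    · -- the k' ≠ i terms vanish
      intro k' _ hk'
      rcases lt_or_gt_of_ne hk' with hlt | hgt
      · have : vdir (Matrix.single a b (1:ℝ)) k' = 0 := by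
          rw [hvdir_def]; simp [not_le.2 hlt]
        rw [this]
        simp
      · have hv : vdir (Matrix.single a b (1:ℝ)) k'
            = (B k' * (Matrix.single a b (1:ℝ) * A)).mulVec x := by
          rw [hvdir_def]; simp [le_of_lt hgt]
        rw [hv]
        exact hvanish k' hgt _
    · simp
  -- finish with norm estimates
  rw [show (matGrad (fun V => F fun k' => (prodRev V (Finset.Iic k')).mulVec x)
        (Function.update W i W1i) i
      - matGrad (fun V => F fun k' => (prodRev V (Finset.Iic k')).mulVec x)
        (Function.update W i W2i) i)
      = matGrad g (Function.update W i W1i) i - matGrad g (Function.update W i W2i) i from rfl,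
    hmain]
  have hGi := hLip i (Finset.mem_Ici.2 le_rfl)
  rw [Function.update_self, Function.update_self] at hGi
  have hnormA : ‖Aᵀ‖ ≤ ∏ j ∈ Finset.Iio i, ‖W j‖ := by
    rw [← Matrix.conjTranspose_eq_transpose_of_trivial, Matrix.l2_opNorm_conjTranspose]
    exact norm_prodRev_le hd W (Finset.Iio i)
  calc ‖(matGrad f (fun k' => prodRev (Function.update W i W1i) (Finset.Iic k')) i
        - matGrad f (fun k' => prodRev (Function.update W i W2i) (Finset.Iic k')) i) * Aᵀ‖
      ≤ ‖matGrad f (fun k' => prodRev (Function.update W i W1i) (Finset.Iic k')) i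
        - matGrad f (fun k' => prodRev (Function.update W i W2i) (Finset.Iic k')) i‖ * ‖Aᵀ‖ :=
        norm_mul_le _ _
    _ ≤ (L i * ‖W1i - W2i‖) * (∏ j ∈ Finset.Iio i, ‖W j‖) := by
        refine mul_le_mul hGi hnormA (norm_nonneg _) (le_trans (norm_nonneg _) hGi)
    _ = (∏ j ∈ Finset.Iio i, ‖W j‖) * L i * ‖W1i - W2i‖ := by ring
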